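/- Let η : ℝ² → ℝ be twice continuously differentiable and define B(x) = R(η(x)), where R(θ) is the 2 × 2 rotation matrix. Then for every x ∈ ℝ², (ΔB(x))ᵀ·B(x) = [[−|∇η(x)|², Δη(x)],[−Δη(x), −|∇η(x)|²]], where |∇η|² = (∂_{x₁}η)² + (∂_{x₂}η)². Consequently, the matrix (ΔB(x))ᵀ·B(x) is symmetric if and only if Δη(x) = 0; that is, B is a harmonic orthogonal matrix-valued field (satisfying (ΔB)ᵀB − Bᵀ(ΔB) = 0 and BᵀB = I everywhere) if and only if η is harmonic. -/

import Mathlib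

open Matrix

attribute [local instance] Matrix.frobeniusNormedAddCommGroup Matrix.frobeniusNormedSpace

/-- The entrywise Laplacian `Δu = ∂²u/∂x₁² + ∂²u/∂x₂²` of a function `u : ℝ² → E`. -/
noncomputable def lap {E : Type*} [NormedAddCommGroup E] [NormedSpace ℝ E]
    (u : ℝ × ℝ → E) (x : ℝ × ℝ) : E :=
  deriv (fun s => deriv (fun s' => u (s', x.2)) s) x.1 +
    deriv (fun s => deriv (fun s' => u (x.1, s')) s) x.2

/-- The partial derivative in the first variable of `u : ℝ² → E`. -/
noncomputable def pd1 {E : Type*} [NormedAddCommGroup E] [NormedSpace ℝ E]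
    (u : ℝ × ℝ → E) (x : ℝ × ℝ) : E :=
  deriv (fun s => u (s, x.2)) x.1

/-- The partial derivative in the second variable of `u : ℝ² → E`. -/
noncomputable def pd2 {E : Type*} [NormedAddCommGroup E] [NormedSpace ℝ E]
    (u : ℝ × ℝ → E) (x : ℝ × ℝ) : E :=
  deriv (fun s => u (x.1, s)) x.2

/-- The `2 × 2` rotation matrix of angle `θ`. -/
noncomputable def rot (θ : ℝ) : Matrix (Fin 2) (Fin 2) ℝ :=
  !![Real.cos θ, -Real.sin θ; Real.sin θ, Real.cos θ]

def Cm : Matrix (Fin 2) (Fin 2) ℝ := !![0, -1; 1, 0]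

lemma rot_eq (θ : ℝ) : rot θ = Real.cos θ • (1 : Matrix (Fin 2) (Fin 2) ℝ) + Real.sin θ • Cm := by
  ext i j
  fin_cases i <;> fin_cases j <;> simp [rot, Cm, Matrix.one_apply]

lemma hasDerivAt_rot_comp (g : ℝ → ℝ) (hg : Differentiable ℝ g) (u : ℝ) :
    HasDerivAt (fun v => rot (g v))
      ((-Real.sin (g u) * deriv g u) • (1 : Matrix (Fin 2) (Fin 2) ℝ)
        + (Real.cos (g u) * deriv g u) • Cm) u := by
  simp only [rot_eq]
  exact (((Real.hasDerivAt_cos (g u)).comp u (hg u).hasDerivAt).smul_const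
      (1 : Matrix (Fin 2) (Fin 2) ℝ)).add
    (((Real.hasDerivAt_sin (g u)).comp u (hg u).hasDerivAt).smul_const Cm)

lemma deriv2_rot (g : ℝ → ℝ) (hg : ContDiff ℝ 2 g) (t : ℝ) :
    deriv (fun u => deriv (fun v => rot (g v)) u) t
      = (-Real.cos (g t) * (deriv g t) ^ 2 - Real.sin (g t) * deriv (deriv g) t) •
          (1 : Matrix (Fin 2) (Fin 2) ℝ)
        + (-Real.sin (g t) * (deriv g t) ^ 2 + Real.cos (g t) * deriv (deriv g) t) • Cm := by
  have hgd : Differentiable ℝ g := hg.differentiable (by norm_num)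
  have hgd2 : Differentiable ℝ (deriv g) := by
    have h2 : ContDiff ℝ (1 + 1) g := by simpa [one_add_one_eq_two] using hg
    exact (contDiff_succ_iff_deriv.mp h2).2.2.differentiable (by norm_num)
  have hrw : (fun u => deriv (fun v => rot (g v)) u)
      = fun u => (-Real.sin (g u) * deriv g u) • (1 : Matrix (Fin 2) (Fin 2) ℝ)
        + (Real.cos (g u) * deriv g u) • Cm :=
    funext fun u => (hasDerivAt_rot_comp g hgd u).deriv
  rw [hrw]
  have h1 : HasDerivAt (fun u => -Real.sin (g u) * deriv g u)
      (-(Real.cos (g t) * deriv g t) * deriv g t + -Real.sin (g t) * deriv (deriv g) t) t :=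
    (((Real.hasDerivAt_sin (g t)).comp t (hgd t).hasDerivAt).neg).mul (hgd2 t).hasDerivAt
  have h2 : HasDerivAt (fun u => Real.cos (g u) * deriv g u)
      ((-Real.sin (g t) * deriv g t) * deriv g t + Real.cos (g t) * deriv (deriv g) t) t :=
    (((Real.hasDerivAt_cos (g t)).comp t (hgd t).hasDerivAt)).mul (hgd2 t).hasDerivAt
  erw [HasDerivAt.deriv (f := fun u => (-Real.sin (g u) * deriv g u) • (1 : Matrix (Fin 2) (Fin 2) ℝ)
      + (Real.cos (g u) * deriv g u) • Cm) ((h1.smul_const (1 : Matrix (Fin 2) (Fin 2) ℝ)).add (h2.smul_const Cm))]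
  module

lemma lap_rot (η : ℝ × ℝ → ℝ) (hη : ContDiff ℝ 2 η) (x : ℝ × ℝ) :
    lap (fun y => rot (η y)) x
      = (-Real.cos (η x) * (pd1 η x ^ 2 + pd2 η x ^ 2) - Real.sin (η x) * lap η x) •
          (1 : Matrix (Fin 2) (Fin 2) ℝ)
        + (-Real.sin (η x) * (pd1 η x ^ 2 + pd2 η x ^ 2) + Real.cos (η x) * lap η x) • Cm := by
  have hg1 : ContDiff ℝ 2 (fun t => η (t, x.2)) := hη.comp (contDiff_id.prodMk contDiff_const)
  have hg2 : ContDiff ℝ 2 (fun t => η (x.1, t)) := hη.comp (contDiff_const.prodMk contDiff_id)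
  have e1 := deriv2_rot _ hg1 x.1
  have e2 := deriv2_rot _ hg2 x.2
  simp only [lap, pd1, pd2]
  erw [e1, e2]
  simp only [Prod.mk.eta]
  module

/-- For `B = R(η)` with `η` twice continuously differentiable,
`(ΔB)ᵀ B = [[−|∇η|², Δη],[−Δη, −|∇η|²]]`; consequently `(ΔB)ᵀ B` is symmetric iff
`Δη = 0`, and `B` is a harmonic orthogonal matrix-valued field iff `η` is harmonic. -/
theorem stmt4 (η : ℝ × ℝ → ℝ) (hη : ContDiff ℝ 2 η)
    (B : ℝ × ℝ → Matrix (Fin 2) (Fin 2) ℝ) (hB : ∀ x : ℝ × ℝ, B x = rot (η x)) :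
    (∀ x : ℝ × ℝ, (lap B x)ᵀ * B x =
        !![-(pd1 η x ^ 2 + pd2 η x ^ 2), lap η x;
           -(lap η x), -(pd1 η x ^ 2 + pd2 η x ^ 2)]) ∧
      (∀ x : ℝ × ℝ, ((lap B x)ᵀ * B x).IsSymm ↔ lap η x = 0) ∧
      (((∀ x : ℝ × ℝ, (lap B x)ᵀ * B x - (B x)ᵀ * lap B x = 0) ∧
          ∀ x : ℝ × ℝ, (B x)ᵀ * B x = 1) ↔
        ∀ x : ℝ × ℝ, lap η x = 0) := by
  have hBe : B = fun y => rot (η y) := funext hB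
  subst hBe
  beta_reduce
  have key : ∀ x : ℝ × ℝ, (lap (fun y => rot (η y)) x)ᵀ * rot (η x) =
      !![-(pd1 η x ^ 2 + pd2 η x ^ 2), lap η x;
         -(lap η x), -(pd1 η x ^ 2 + pd2 η x ^ 2)] := by
    intro x
    rw [lap_rot η hη x, rot_eq]
    have pyth : Real.sin (η x) ^ 2 + Real.cos (η x) ^ 2 = 1 := Real.sin_sq_add_cos_sq _
    set G := pd1 η x ^ 2 + pd2 η x ^ 2 with hG
    set h := lap η x with hh
    set c := Real.cos (η x) with hc
    set s := Real.sin (η x) with hs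
    ext i j
    fin_cases i <;> fin_cases j <;>
      simp [Cm, Matrix.mul_apply, Fin.sum_univ_two, Matrix.one_apply,
        Matrix.transpose_apply, Matrix.add_apply, Matrix.smul_apply, Matrix.vecHead, Matrix.vecTail] <;>
      first
        | linear_combination G * pyth
        | linear_combination (-G) * pyth
        | linear_combination h * pyth
        | linear_combination (-h) * pyth
        | ring
  have etrans : ∀ x : ℝ × ℝ, (rot (η x))ᵀ * lap (fun y => rot (η y)) x
      = ((lap (fun y => rot (η y)) x)ᵀ * rot (η x))ᵀ := by
    intro x
    rw [Matrix.transpose_mul, Matrix.transpose_transpose]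
  refine ⟨key, fun x => ?_, ?_⟩
  · constructor
    · intro hs
      have hs' := key x ▸ (hs : _ᵀ = _)
      have := congrFun (congrFun hs' 0) 1
      simp [Matrix.transpose_apply, Matrix.vecHead, Matrix.vecTail] at this
      linarith
    · intro h0
      rw [Matrix.IsSymm, key x, h0]
      ext i j; fin_cases i <;> fin_cases j <;> simp [Matrix.transpose_apply, Matrix.vecHead, Matrix.vecTail]
  · constructor
    · rintro ⟨hd, -⟩ x
      have h := hd x
      rw [etrans x, key x] at h
      have := congrFun (congrFun h 0) 1
      simp [Matrix.sub_apply, Matrix.transpose_apply, Matrix.vecHead, Matrix.vecTail] at this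
      linarith
    · intro h0
      constructor
      · intro x
        rw [etrans x, key x, h0 x]
        ext i j; fin_cases i <;> fin_cases j <;> simp [Matrix.transpose_apply, Matrix.vecHead, Matrix.vecTail]
      · intro x
        have pyth : Real.sin (η x) ^ 2 + Real.cos (η x) ^ 2 = 1 := Real.sin_sq_add_cos_sq _
        ext i j
        fin_cases i <;> fin_cases j <;>
          simp [rot, Matrix.mul_apply, Fin.sum_univ_two, Matrix.one_apply,
            Matrix.transpose_apply, Matrix.vecHead, Matrix.vecTail] <;>
          first | linear_combination pyth | ring
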